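/- Let Ξ be an n×n random symmetric matrix with zero diagonal whose entries above the diagonal are independent centered random variables uniformly bounded in absolute value by √h. Let r̃, δ > 0 be such that P(‖row_i(Ξ)‖₂² ≥ r̃) ≤ δ for every i ∈ [n]. Let S be a set of unordered pairs of indices in [n] which are pairwise disjoint (no two pairs share an index). Then P(for every {i,j} ∈ S, max(‖row_i(Ξ)‖₂², ‖row_j(Ξ)‖₂²) ≥ r̃ + 2|S|h) ≤ (2δ)^{|S|}. -/

import Mathlib

open MeasureTheory ProbabilityTheory

namespace Stmt12

variable {n : ℕ}

abbrev I (n : ℕ) := {pr : Fin n × Fin n // pr.1 < pr.2}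

/-- all indices used by pairs of `S` -/
def T (S : Finset (Fin n × Fin n)) : Finset (Fin n) := S.biUnion fun pr => {pr.1, pr.2}

/-- the coordinates kept for the truncated row sums of pair `pr` -/
def K (S : Finset (Fin n × Fin n)) (pr : Fin n × Fin n) : Finset (Fin n) :=
  Finset.univ \ (T S \ {pr.1, pr.2})

/-- the (above-diagonal) entries that the truncated event of pair `pr` depends on -/
def G (S : Finset (Fin n × Fin n)) (pr : Fin n × Fin n) : Finset (I n) :=
  Finset.univ.filter fun e =>
    (e.1.1 = pr.1 ∨ e.1.1 = pr.2 ∨ e.1.2 = pr.1 ∨ e.1.2 = pr.2) ∧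
      e.1.1 ∈ K S pr ∧ e.1.2 ∈ K S pr

/-- reading off the squared entry `(i,k)` from a tuple indexed by `G S pr` -/
noncomputable def q (S : Finset (Fin n × Fin n)) (pr : Fin n × Fin n)
    (x : {y : I n // y ∈ G S pr} → ℝ) (i k : Fin n) : ℝ :=
  if h : i < k then
    (if hG : (⟨(i, k), h⟩ : I n) ∈ G S pr then (x ⟨⟨(i, k), h⟩, hG⟩) ^ 2 else 0)
  else if h' : k < i then
    (if hG : (⟨(k, i), h'⟩ : I n) ∈ G S pr then (x ⟨⟨(k, i), h'⟩, hG⟩) ^ 2 else 0)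
  else 0

lemma measurable_q (S : Finset (Fin n × Fin n)) (pr : Fin n × Fin n) (i k : Fin n) :
    Measurable fun x => q S pr x i k := by
  unfold q
  split_ifs <;>
    first
      | exact measurable_const
      | exact (measurable_pi_apply _).pow_const 2

lemma fst_mem_K (S : Finset (Fin n × Fin n)) (pr : Fin n × Fin n) : pr.1 ∈ K S pr := by
  simp [K]

lemma snd_mem_K (S : Finset (Fin n × Fin n)) (pr : Fin n × Fin n) : pr.2 ∈ K S pr := by
  simp [K]

lemma q_eval (S : Finset (Fin n × Fin n)) (pr : Fin n × Fin n)
    (Ξr : Fin n → Fin n → ℝ) (hsym : ∀ i j, Ξr i j = Ξr j i) (hdiag : ∀ i, Ξr i i = 0)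
    (i : Fin n) (hi : i = pr.1 ∨ i = pr.2) (k : Fin n) (hk : k ∈ K S pr) :
    q S pr (fun e => Ξr e.1.1.1 e.1.1.2) i k = Ξr i k ^ 2 := by
  have hiK : i ∈ K S pr := by
    rcases hi with rfl | rfl
    · exact fst_mem_K S pr
    · exact snd_mem_K S pr
  unfold q
  rcases lt_trichotomy i k with hlt | heq | hgt
  · have hGmem : (⟨(i, k), hlt⟩ : I n) ∈ G S pr := by
      refine Finset.mem_filter.mpr ⟨Finset.mem_univ _, ?_, hiK, hk⟩
      rcases hi with h' | h' <;> simp [h']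
    rw [dif_pos hlt, dif_pos hGmem]
  · subst heq
    rw [dif_neg (lt_irrefl i), dif_neg (lt_irrefl i), hdiag i]
    ring
  · have hGmem : (⟨(k, i), hgt⟩ : I n) ∈ G S pr := by
      refine Finset.mem_filter.mpr ⟨Finset.mem_univ _, ?_, hk, hiK⟩
      rcases hi with h' | h' <;> simp [h']
    rw [dif_neg (not_lt.mpr hgt.le), dif_pos hgt, dif_pos hGmem]
    show Ξr k i ^ 2 = Ξr i k ^ 2
    rw [hsym k i]

lemma G_disjoint {S : Finset (Fin n × Fin n)} {pr pr' : Fin n × Fin n}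
    (hpr : pr ∈ S) (h1 : pr.1 ≠ pr'.1) (h2 : pr.1 ≠ pr'.2)
    (h3 : pr.2 ≠ pr'.1) (h4 : pr.2 ≠ pr'.2) :
    Disjoint (G S pr) (G S pr') := by
  rw [Finset.disjoint_left]
  rintro e he he'
  simp only [G, Finset.mem_filter, Finset.mem_univ, true_and] at he he'
  obtain ⟨ht, hk1, hk2⟩ := he
  obtain ⟨-, hk1', hk2'⟩ := he'
  have hmemT : ∀ c : Fin n, (c = pr.1 ∨ c = pr.2) → c ∉ K S pr' := by
    intro c hc hcK
    simp only [K, Finset.mem_sdiff, Finset.mem_univ, true_and] at hcK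
    refine hcK ⟨?_, ?_⟩
    · exact Finset.mem_biUnion.mpr ⟨pr, hpr, by rcases hc with rfl | rfl <;> simp⟩
    · rcases hc with rfl | rfl <;> simp [h1, h2, h3, h4]
  rcases ht with h | h | h | h
  · exact hmemT _ (Or.inl h) hk1'
  · exact hmemT _ (Or.inr h) hk1'
  · exact hmemT _ (Or.inl h) hk2'
  · exact hmemT _ (Or.inr h) hk2'

/-- the truncated event of pair `pr`, as a set in the tuple space -/
def N (r : ℝ) (S : Finset (Fin n × Fin n)) (pr : Fin n × Fin n) :
    Set ({y : I n // y ∈ G S pr} → ℝ) :=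
  {x | r ≤ ∑ k ∈ K S pr, q S pr x pr.1 k ∨ r ≤ ∑ k ∈ K S pr, q S pr x pr.2 k}

lemma measurableSet_N (r : ℝ) (S : Finset (Fin n × Fin n)) (pr : Fin n × Fin n) :
    MeasurableSet (N r S pr) := by
  have h1 : ∀ i : Fin n,
      Measurable fun x : {y : I n // y ∈ G S pr} → ℝ => ∑ k ∈ K S pr, q S pr x i k :=
    fun i => Finset.measurable_sum _ fun k _ => measurable_q S pr i k
  unfold N
  rw [Set.setOf_or]
  exact (measurableSet_le measurable_const (h1 _)).union
    (measurableSet_le measurable_const (h1 _))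

end Stmt12

open Stmt12

/-- Let `Ξ` be an `n×n` random symmetric matrix with zero diagonal and
independent centered above-diagonal entries bounded by `√h`. If each row satisfies
`P(‖row_i‖₂² ≥ r̃) ≤ δ`, then for any set `S` of pairwise disjoint unordered pairs of indices,
`P(∀ {i,j} ∈ S, max(‖row_i‖₂², ‖row_j‖₂²) ≥ r̃ + 2|S|h) ≤ (2δ)^{|S|}`. -/
theorem stmt_12 {Ω : Type*} [MeasureSpace Ω] [IsProbabilityMeasure (ℙ : Measure Ω)]
    (n : ℕ) (h : ℝ) (hh : 0 ≤ h)
    (Ξ : Ω → Matrix (Fin n) (Fin n) ℝ)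
    (hmeas : ∀ i j, Measurable fun ω => Ξ ω i j)
    (hsym : ∀ ω i j, Ξ ω i j = Ξ ω j i)
    (hdiag : ∀ ω i, Ξ ω i i = 0)
    (hbdd : ∀ ω i j, |Ξ ω i j| ≤ Real.sqrt h)
    (hcent : ∀ i j : Fin n, i ≠ j → ∫ ω, Ξ ω i j = 0)
    (hindep : iIndepFun
      (fun (e : {pr : Fin n × Fin n // pr.1 < pr.2}) => fun ω => Ξ ω e.1.1 e.1.2) ℙ)
    (r δ : ℝ)
    (hrow : ∀ i, ℙ {ω | r ≤ ∑ j, (Ξ ω i j) ^ 2} ≤ ENNReal.ofReal δ)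
    (S : Finset (Fin n × Fin n))
    (hSlt : ∀ pr ∈ S, pr.1 < pr.2)
    (hdisj : ∀ pr ∈ S, ∀ pr' ∈ S, pr ≠ pr' →
      pr.1 ≠ pr'.1 ∧ pr.1 ≠ pr'.2 ∧ pr.2 ≠ pr'.1 ∧ pr.2 ≠ pr'.2) :
    ℙ {ω | ∀ pr ∈ S,
        r + 2 * S.card * h ≤ max (∑ j, (Ξ ω pr.1 j) ^ 2) (∑ j, (Ξ ω pr.2 j) ^ 2)}
      ≤ ENNReal.ofReal ((2 * δ) ^ S.card) := by
  classical
  by_cases hS : S = ∅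
  · subst hS
    simp
  -- the truncated events
  set E : (Fin n × Fin n) → Set Ω := fun pr =>
    {ω | r ≤ ∑ k ∈ K S pr, Ξ ω pr.1 k ^ 2 ∨ r ≤ ∑ k ∈ K S pr, Ξ ω pr.2 k ^ 2} with hE
  have hEpre : ∀ pr : Fin n × Fin n,
      E pr = (fun ω (e : {y : I n // y ∈ G S pr}) => Ξ ω e.1.1.1 e.1.1.2) ⁻¹' N r S pr := by
    intro pr
    ext ω
    have hsum : ∀ i, (i = pr.1 ∨ i = pr.2) →
        ∑ k ∈ K S pr, q S pr (fun e : {y : I n // y ∈ G S pr} => Ξ ω e.1.1.1 e.1.1.2) i k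
          = ∑ k ∈ K S pr, Ξ ω i k ^ 2 :=
      fun i hi => Finset.sum_congr rfl fun k hk =>
        q_eval S pr (fun a b => Ξ ω a b) (hsym ω) (hdiag ω) i hi k hk
    simp only [hE, Set.mem_setOf_eq, Set.mem_preimage, N,
      hsum pr.1 (Or.inl rfl), hsum pr.2 (Or.inr rfl)]
  have hGdisj : ∀ pr ∈ S, ∀ pr' ∈ S, pr ≠ pr' → Disjoint (G S pr) (G S pr') := by
    intro pr hpr pr' hpr' hne
    obtain ⟨h1, h2, h3, h4⟩ := hdisj pr hpr pr' hpr' hne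
    exact G_disjoint hpr h1 h2 h3 h4
  -- the decoupling induction
  have main : ∀ s : Finset (Fin n × Fin n), s ⊆ S →
      ℙ (⋂ pr ∈ s, E pr) ≤ ∏ pr ∈ s, ℙ (E pr) := by
    intro s
    induction s using Finset.induction_on with
    | empty => intro _; simp
    | @insert a s' ha ih =>
      intro hsub
      have haS : a ∈ S := hsub (Finset.mem_insert_self a s')
      have hs'S : s' ⊆ S := fun x hx => hsub (Finset.mem_insert_of_mem hx)
      set U : Finset (I n) := s'.biUnion (fun pr => G S pr) with hU
      have hdisjU : Disjoint (G S a) U := by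
        rw [Finset.disjoint_biUnion_right]
        intro pr hpr
        exact hGdisj a haS pr (hs'S hpr) (by rintro rfl; exact ha hpr)
      have hIndep := hindep.indepFun_finset (G S a) U hdisjU
        (fun e => hmeas e.1.1 e.1.2)
      set M : Set ({y : I n // y ∈ U} → ℝ) :=
        ⋂ pr, ⋂ (hpr : pr ∈ s'),
          (fun (x : {y : I n // y ∈ U} → ℝ) (e : {y : I n // y ∈ G S pr}) =>
            x ⟨e.1, Finset.subset_biUnion_of_mem (fun pr => G S pr) hpr e.2⟩) ⁻¹' N r S pr
        with hM
      have hMmeas : MeasurableSet M :=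
        MeasurableSet.iInter fun pr => MeasurableSet.iInter fun hpr =>
          (measurableSet_N r S pr).preimage
            (measurable_pi_lambda _ fun e => measurable_pi_apply _)
      have hYM : (⋂ pr ∈ s', E pr)
          = (fun ω (e : {y : I n // y ∈ U}) => Ξ ω e.1.1.1 e.1.1.2) ⁻¹' M := by
        simp only [hM, Set.preimage_iInter]
        apply Set.iInter_congr
        intro pr
        apply Set.iInter_congr
        intro hpr
        rw [hEpre pr]
        rfl
      calc ℙ (⋂ pr ∈ insert a s', E pr)
          = ℙ (E a ∩ ⋂ pr ∈ s', E pr) := by rw [Finset.set_biInter_insert]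
        _ = ℙ (E a) * ℙ (⋂ pr ∈ s', E pr) := by
            rw [hEpre a, hYM]
            exact hIndep.measure_inter_preimage_eq_mul _ _ (measurableSet_N r S a) hMmeas
        _ ≤ ℙ (E a) * ∏ pr ∈ s', ℙ (E pr) := mul_le_mul_right (ih hs'S) _
        _ = ∏ pr ∈ insert a s', ℙ (E pr) := by rw [Finset.prod_insert ha]
  -- the original event is contained in the intersection of truncated events
  have hsq : ∀ ω i k, Ξ ω i k ^ 2 ≤ h := by
    intro ω i k
    have h1 := hbdd ω i k
    have h2 := Real.sq_sqrt hh
    nlinarith [abs_nonneg (Ξ ω i k), sq_abs (Ξ ω i k)]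
  have hAsub : {ω | ∀ pr ∈ S,
      r + 2 * S.card * h ≤ max (∑ j, (Ξ ω pr.1 j) ^ 2) (∑ j, (Ξ ω pr.2 j) ^ 2)}
      ⊆ ⋂ pr ∈ S, E pr := by
    intro ω hω
    simp only [Set.mem_iInter]
    intro pr hpr
    have h2 := hω pr hpr
    have hDcard : (((T S) \ {pr.1, pr.2}).card : ℝ) ≤ 2 * S.card := by
      have hc1 : ((T S) \ {pr.1, pr.2}).card ≤ (T S).card :=
        Finset.card_le_card Finset.sdiff_subset
      have hTc : (T S).card ≤ 2 * S.card := by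
        calc (T S).card ≤ ∑ p ∈ S, ({p.1, p.2} : Finset (Fin n)).card :=
              Finset.card_biUnion_le
          _ ≤ ∑ _p ∈ S, 2 :=
              Finset.sum_le_sum fun p _ => (Finset.card_insert_le _ _).trans (by simp)
          _ = 2 * S.card := by rw [Finset.sum_const, smul_eq_mul, mul_comm]
      exact_mod_cast hc1.trans hTc
    have key : ∀ i : Fin n,
        ∑ k ∈ (T S) \ {pr.1, pr.2}, Ξ ω i k ^ 2 ≤ 2 * S.card * h := by
      intro i
      calc ∑ k ∈ (T S) \ {pr.1, pr.2}, Ξ ω i k ^ 2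
          ≤ ∑ _k ∈ (T S) \ {pr.1, pr.2}, h := Finset.sum_le_sum fun k _ => hsq ω i k
        _ = ((T S) \ {pr.1, pr.2}).card * h := by rw [Finset.sum_const, nsmul_eq_mul]
        _ ≤ 2 * S.card * h := mul_le_mul_of_nonneg_right hDcard hh
    have hKeq : ∀ i : Fin n,
        ∑ k ∈ K S pr, Ξ ω i k ^ 2
          = ∑ j, Ξ ω i j ^ 2 - ∑ k ∈ (T S) \ {pr.1, pr.2}, Ξ ω i k ^ 2 :=
      fun i => Finset.sum_sdiff_eq_sub (Finset.subset_univ _)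
    rcases le_max_iff.mp h2 with hle | hle
    · left; rw [hKeq]; linarith [key pr.1]
    · right; rw [hKeq]; linarith [key pr.2]
  -- each truncated event has probability at most 2δ
  have hEbound : ∀ pr ∈ S, ℙ (E pr) ≤ ENNReal.ofReal δ + ENNReal.ofReal δ := by
    intro pr _
    have hsub2 : E pr ⊆ {ω | r ≤ ∑ j, Ξ ω pr.1 j ^ 2} ∪ {ω | r ≤ ∑ j, Ξ ω pr.2 j ^ 2} := by
      intro ω hω
      rcases hω with hc | hc
      · exact Or.inl (hc.trans (Finset.sum_le_sum_of_subset_of_nonneg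
          (Finset.subset_univ _) fun k _ _ => sq_nonneg _))
      · exact Or.inr (hc.trans (Finset.sum_le_sum_of_subset_of_nonneg
          (Finset.subset_univ _) fun k _ _ => sq_nonneg _))
    calc ℙ (E pr) ≤ ℙ ({ω | r ≤ ∑ j, Ξ ω pr.1 j ^ 2} ∪ {ω | r ≤ ∑ j, Ξ ω pr.2 j ^ 2}) :=
          measure_mono hsub2
      _ ≤ ℙ {ω | r ≤ ∑ j, Ξ ω pr.1 j ^ 2} + ℙ {ω | r ≤ ∑ j, Ξ ω pr.2 j ^ 2} :=
          measure_union_le _ _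
      _ ≤ ENNReal.ofReal δ + ENNReal.ofReal δ := add_le_add (hrow pr.1) (hrow pr.2)
  have hchain : ℙ {ω | ∀ pr ∈ S,
      r + 2 * S.card * h ≤ max (∑ j, (Ξ ω pr.1 j) ^ 2) (∑ j, (Ξ ω pr.2 j) ^ 2)}
      ≤ ∏ _pr ∈ S, (ENNReal.ofReal δ + ENNReal.ofReal δ) :=
    le_trans (measure_mono hAsub) (le_trans (main S subset_rfl)
      (Finset.prod_le_prod' hEbound))
  rcases le_or_gt 0 δ with hδ | hδ
  · refine hchain.trans_eq ?_
    rw [Finset.prod_const,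
      show ENNReal.ofReal δ + ENNReal.ofReal δ = ENNReal.ofReal (2 * δ) by
        rw [← ENNReal.ofReal_add hδ hδ]; congr 1; ring,
      ← ENNReal.ofReal_pow (by linarith)]
  · refine le_trans hchain ?_
    rw [Finset.prod_const, ENNReal.ofReal_eq_zero.mpr (by linarith), add_zero,
      zero_pow (Finset.card_ne_zero.mpr (Finset.nonempty_iff_ne_empty.mpr hS))]
    exact zero_le
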